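/- For odd m ≥ 3 and k ≥ 0, the negabinary representation of 2^(m+k+1) − 2^m − 1 has digit 1 exactly at positions {0, 1, m, m+k+1} when k is even, and exactly at positions {0, 1, m, m+k+1, m+k+2} when k is odd. -/

import Mathlib

/-- Digits of the negabinary (base -2) representation, least significant first. -/
def negaDigits (n : ℤ) : List ℕ :=
  if n = 0 then [] else (n % 2).toNat :: negaDigits ((n % 2 - n) / 2)
termination_by 2 * n.natAbs + (if n < 0 then 1 else 0)
decreasing_by split_ifs <;> omega

/-- Parity of the number of 1's in the negabinary representation of n. -/
def g (n : ℕ) : ℕ := (negaDigits n).sum % 2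

/-- The digit at position i in the negabinary representation. -/
def negaDigit (n : ℤ) (i : ℕ) : ℕ := (negaDigits n).getD i 0

/-- Number of runs (maximal blocks) of 1's in the binary representation of n. -/
def runsOfOnes (n : ℕ) : ℕ :=
  ((Finset.range (n + 1)).filter (fun i => n.testBit i ∧ ¬ n.testBit (i + 1))).card

/-- Parity of the number of runs of 1's in the binary representation of n. -/
def r (n : ℕ) : ℕ := runsOfOnes n % 2



def eval : List ℕ → ℤ
  | [] => 0
  | d :: L => (d : ℤ) + (-2) * eval L

lemma eval_ne_zero : ∀ L : List ℕ, (∀ d ∈ L, d ≤ 1) → L.getLast? = some 1 → eval L ≠ 0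
  | [], _, h2 => by simp at h2
  | [d], h1, h2 => by
      simp at h2; subst h2; simp [eval]
  | d :: b :: l, h1, h2 => by
      have he := eval_ne_zero (b :: l) (fun x hx => h1 x (by simp [hx])) (by simpa using h2)
      have hd : d ≤ 1 := h1 d (by simp)
      show (d : ℤ) + (-2) * eval (b :: l) ≠ 0
      interval_cases d <;> omega

lemma negaDigits_eval : ∀ L : List ℕ, (∀ d ∈ L, d ≤ 1) → L.getLast? = some 1 →
    negaDigits (eval L) = L
  | [], _, h2 => by simp at h2
  | d :: L, h1, h2 => by
      have hd : d ≤ 1 := h1 d (by simp)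
      have hn : eval (d :: L) ≠ 0 := eval_ne_zero _ h1 h2
      rw [negaDigits, if_neg hn]
      rcases L with _ | ⟨b, l⟩
      · simp at h2; subst h2
        have : eval [1] = 1 := by simp [eval]
        rw [this] at hn ⊢
        norm_num
        rw [negaDigits]
        norm_num
      · have h2' : (b :: l).getLast? = some 1 := by simpa using h2
        have ih := negaDigits_eval (b :: l) (fun x hx => h1 x (by simp [hx])) h2'
        have he : eval (d :: b :: l) = (d : ℤ) + (-2) * eval (b :: l) := rfl
        set e := eval (b :: l)
        have hmod : eval (d :: b :: l) % 2 = (d : ℤ) := by rw [he]; omega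
        have hdiv : ((d : ℤ) - eval (d :: b :: l)) / 2 = e := by
          rw [he]; omega
        rw [hmod, hdiv, ih]
        simp

lemma eval_eq_sum : ∀ L : List ℕ, eval L = ∑ i ∈ Finset.range L.length, (L.getD i 0 : ℤ) * (-2) ^ i
  | [] => by simp [eval]
  | d :: L => by
      rw [List.length_cons, Finset.sum_range_succ']
      simp only [List.getD_cons_succ, List.getD_cons_zero, pow_zero, mul_one]
      rw [show eval (d :: L) = (d : ℤ) + (-2) * eval L from rfl, eval_eq_sum L, Finset.mul_sum, add_comm]
      congr 1
      exact Finset.sum_congr rfl fun i _ => by ring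

lemma eval_ofFn (len : ℕ) (P : ℕ → Prop) [DecidablePred P] :
    eval (List.ofFn (fun j : Fin len => if P j then 1 else 0)) =
      ∑ i ∈ (Finset.range len).filter P, (-2 : ℤ) ^ i := by
  rw [eval_eq_sum, Finset.sum_filter]
  rw [List.length_ofFn]
  refine Finset.sum_congr rfl fun i hi => ?_
  rw [Finset.mem_range] at hi
  have : (List.ofFn (fun j : Fin len => if P j then 1 else 0)).getD i 0
      = if P i then 1 else 0 := by
    rw [List.getD_eq_getElem?_getD, List.getElem?_ofFn, dif_pos hi]
    simp
  rw [this]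
  split_ifs <;> simp

lemma negaDigits_ofFn (len : ℕ) (hlen : 0 < len) (P : ℕ → Prop) [DecidablePred P]
    (hlast : P (len - 1)) :
    negaDigits (eval (List.ofFn (fun j : Fin len => if P j then 1 else 0))) =
      List.ofFn (fun j : Fin len => if P j then 1 else 0) := by
  apply negaDigits_eval
  · intro d hd
    rw [List.mem_ofFn] at hd
    obtain ⟨j, rfl⟩ := hd
    split_ifs <;> omega
  · rw [List.getLast?_eq_getElem?, List.length_ofFn, List.getElem?_ofFn,
      dif_pos (by omega : len - 1 < len)]
    simp [hlast]

lemma negaDigit_ofFn (len : ℕ) (hlen : 0 < len) (P : ℕ → Prop) [DecidablePred P]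
    (hlast : P (len - 1)) (i : ℕ) :
    negaDigit (eval (List.ofFn (fun j : Fin len => if P j then 1 else 0))) i =
      if i < len ∧ P i then 1 else 0 := by
  rw [negaDigit, negaDigits_ofFn len hlen P hlast, List.getD_eq_getElem?_getD,
    List.getElem?_ofFn]
  by_cases h : i < len
  · rw [dif_pos h]
    simp only [Option.getD_some]
    split_ifs with h1 h2 h2 <;> first | rfl | omega | (exfalso; exact h2 ⟨h, h1⟩) | (exfalso; exact h1 h2.2)
  · rw [dif_neg h, if_neg (fun hc => h hc.1)]
    rfl

theorem stmt16 (m k : ℕ) (hm : 3 ≤ m) (hmo : Odd m) (i : ℕ) :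
    negaDigit ((2 : ℤ) ^ (m + k + 1) - 2 ^ m - 1) i =
      if Even k then (if i = 0 ∨ i = 1 ∨ i = m ∨ i = m + k + 1 then 1 else 0)
      else (if i = 0 ∨ i = 1 ∨ i = m ∨ i = m + k + 1 ∨ i = m + k + 2 then 1 else 0) := by
  obtain ⟨b, hb⟩ := hmo
  rcases Nat.even_or_odd k with hk | hk
  · obtain ⟨a, ha⟩ := id hk
    have heven : Even (m + k + 1) := ⟨a + b + 1, by omega⟩
    have hfil : (Finset.range (m + k + 2)).filter
        (fun j => j = 0 ∨ j = 1 ∨ j = m ∨ j = m + k + 1) = {0, 1, m, m + k + 1} := by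
      ext x
      simp only [Finset.mem_filter, Finset.mem_range, Finset.mem_insert, Finset.mem_singleton]
      omega
    have hval : (2 : ℤ) ^ (m + k + 1) - 2 ^ m - 1 =
        eval (List.ofFn (fun j : Fin (m + k + 2) =>
          if (j : ℕ) = 0 ∨ (j : ℕ) = 1 ∨ (j : ℕ) = m ∨ (j : ℕ) = m + k + 1 then 1 else 0)) := by
      rw [eval_ofFn (m + k + 2) (fun j => j = 0 ∨ j = 1 ∨ j = m ∨ j = m + k + 1), hfil,
        Finset.sum_insert (by simp only [Finset.mem_insert, Finset.mem_singleton]; omega), Finset.sum_insert (by simp only [Finset.mem_insert, Finset.mem_singleton]; omega),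
        Finset.sum_insert (by simp only [Finset.mem_insert, Finset.mem_singleton]; omega), Finset.sum_singleton,
        Even.neg_pow heven, Odd.neg_pow ⟨b, hb⟩]
      norm_num
      ring
    have key := negaDigit_ofFn (m + k + 2) (by omega)
      (fun j => j = 0 ∨ j = 1 ∨ j = m ∨ j = m + k + 1) (by omega) i
    rw [hval]
    refine key.trans ?_
    rw [if_pos hk]
    split_ifs <;> omega
  · obtain ⟨a, ha⟩ := id hk
    have hodd : Odd (m + k + 1) := ⟨a + b + 1, by omega⟩
    have heven : Even (m + k + 2) := ⟨a + b + 2, by omega⟩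
    have hfil : (Finset.range (m + k + 3)).filter
        (fun j => j = 0 ∨ j = 1 ∨ j = m ∨ j = m + k + 1 ∨ j = m + k + 2) =
        {0, 1, m, m + k + 1, m + k + 2} := by
      ext x
      simp only [Finset.mem_filter, Finset.mem_range, Finset.mem_insert, Finset.mem_singleton]
      omega
    have hval : (2 : ℤ) ^ (m + k + 1) - 2 ^ m - 1 =
        eval (List.ofFn (fun j : Fin (m + k + 3) =>
          if (j : ℕ) = 0 ∨ (j : ℕ) = 1 ∨ (j : ℕ) = m ∨ (j : ℕ) = m + k + 1 ∨ (j : ℕ) = m + k + 2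
          then 1 else 0)) := by
      rw [eval_ofFn (m + k + 3) (fun j => j = 0 ∨ j = 1 ∨ j = m ∨ j = m + k + 1 ∨ j = m + k + 2),
        hfil, Finset.sum_insert (by simp only [Finset.mem_insert, Finset.mem_singleton]; omega), Finset.sum_insert (by simp only [Finset.mem_insert, Finset.mem_singleton]; omega),
        Finset.sum_insert (by simp only [Finset.mem_insert, Finset.mem_singleton]; omega), Finset.sum_insert (by simp only [Finset.mem_insert, Finset.mem_singleton]; omega),
        Finset.sum_singleton, Even.neg_pow heven, Odd.neg_pow hodd, Odd.neg_pow ⟨b, hb⟩,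
        show m + k + 2 = (m + k + 1) + 1 from rfl, pow_succ]
      ring
    have key := negaDigit_ofFn (m + k + 3) (by omega)
      (fun j => j = 0 ∨ j = 1 ∨ j = m ∨ j = m + k + 1 ∨ j = m + k + 2) (by omega) i
    rw [hval]
    refine key.trans ?_
    have hke : ¬ Even k := by rw [Nat.even_iff]; omega
    rw [if_neg hke]
    split_ifs <;> omega
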